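/- Let C be an F_q-linear sum-rank-metric code in F_q^{m_1×n_1} × ... × F_q^{m_ℓ×n_ℓ} with |C| ≥ 2, where m_1 ≥ ... ≥ m_ℓ > 0 and 0 < n_i ≤ m_i for all i. Let d be the minimum sum-rank distance of C and let j ∈ {1,...,ℓ} and 0 ≤ λ < n_j be the unique integers with d − 1 = n_1 + ... + n_{j−1} + λ. Then |C| ≤ q^{(Σ_{i=j}^{ℓ} m_i n_i) − m_j λ}. -/
import Mathlib

private lemma aux_rank_zero {F : Type*} [Field F] {m n : ℕ} (A : Matrix (Fin m) (Fin n) F)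
    (h : A.rank = 0) : A = 0 := by
  rw [Matrix.rank, Submodule.finrank_eq_zero, LinearMap.range_eq_bot] at h
  ext k c
  have := congrFun (congrArg (fun f => f (Pi.single c 1)) h) k
  simpa [Matrix.mulVecLin, Matrix.mulVec_single] using this

private lemma aux_rank_le_of_cols {F : Type*} [Field F] {m n lam : ℕ} (hlam : lam ≤ n)
    (A : Matrix (Fin m) (Fin n) F)
    (h : ∀ (k : Fin m) (c : Fin n), lam ≤ (c : ℕ) → A k c = 0) : A.rank ≤ lam := by
  classical
  set B : Matrix (Fin m) (Fin lam) F := Matrix.of fun k l => A k (Fin.castLE hlam l) with hB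
  set E : Matrix (Fin lam) (Fin n) F := Matrix.of fun l c => if (c : ℕ) = (l : ℕ) then 1 else 0
  have hAB : A = B * E := by
    ext k c
    rw [Matrix.mul_apply]
    by_cases hc : (c : ℕ) < lam
    · rw [Finset.sum_eq_single (⟨(c : ℕ), hc⟩ : Fin lam)]
      · simp [B, E, Fin.castLE, Fin.ext_iff]
      · intro l _ hl
        simp only [E, Matrix.of_apply]
        rw [if_neg, mul_zero]
        exact fun hcl => hl (Fin.ext hcl.symm)
      · exact fun hmem => absurd (Finset.mem_univ _) hmem
    · rw [h k c (le_of_not_gt hc)]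
      apply (Finset.sum_eq_zero _).symm
      intro l _
      simp only [E, Matrix.of_apply]
      rw [if_neg, mul_zero]
      omega
  calc A.rank = (B * E).rank := by rw [hAB]
    _ ≤ E.rank := Matrix.rank_mul_le_right B E
    _ ≤ lam := E.rank_le_card_height.trans (Fintype.card_fin lam).le

private lemma aux_card_subtype_le {n lam : ℕ} (h : lam ≤ n) :
    Nat.card {c : Fin n // lam ≤ (c : ℕ)} = n - lam := by
  have e : {c : Fin n // lam ≤ (c : ℕ)} ≃ Fin (n - lam) :=
    { toFun := fun c => ⟨c.1.1 - lam, by have := c.1.2; have := c.2; omega⟩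
      invFun := fun c => ⟨⟨c.1 + lam, by have := c.2; omega⟩, by simp⟩
      left_inv := fun c => by
        have := c.2
        ext
        simp
        omega
      right_inv := fun c => by ext; simp }
  rw [Nat.card_congr e, Nat.card_eq_fintype_card, Fintype.card_fin]

/-- Singleton-like bound for linear sum-rank-metric codes with varying matrix sizes. -/
theorem stmt_5 (q : ℕ) (hq : IsPrimePow q) (F : Type*) [Field F] [Fintype F]
    (hcard : Fintype.card F = q) (ℓ : ℕ) (hℓ : 0 < ℓ) (mv nv : Fin ℓ → ℕ)
    (hmanti : ∀ i i' : Fin ℓ, i ≤ i' → mv i' ≤ mv i)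
    (hmpos : ∀ i, 0 < mv i) (hnpos : ∀ i, 0 < nv i) (hnm : ∀ i, nv i ≤ mv i)
    (C : Submodule F (∀ i : Fin ℓ, Matrix (Fin (mv i)) (Fin (nv i)) F))
    (hC2 : 2 ≤ Nat.card C)
    (d : ℕ)
    (hd : IsLeast {w : ℕ | ∃ X ∈ C, ∃ Y ∈ C, X ≠ Y ∧ w = ∑ i, (X i - Y i).rank} d)
    (j : Fin ℓ) (lam : ℕ) (hlam : lam < nv j)
    (hdec : d - 1 = (∑ i ∈ Finset.univ.filter (· < j), nv i) + lam) :
    Nat.card C ≤ q ^ ((∑ i ∈ Finset.univ.filter (j ≤ ·), mv i * nv i) - mv j * lam) := by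
  classical
  -- d is positive
  have hd1 : 1 ≤ d := by
    by_contra hd0
    push_neg at hd0
    interval_cases d
    obtain ⟨X, hX, Y, hY, hXY, hsum⟩ := hd.1
    apply hXY
    have hz : ∀ i : Fin ℓ, (X i - Y i).rank = 0 := by
      intro i
      have := (Finset.sum_eq_zero_iff.mp hsum.symm) i (Finset.mem_univ i)
      exact this
    funext i
    have := aux_rank_zero (X i - Y i) (hz i)
    exact sub_eq_zero.mp this
  -- the predicate selecting "kept" positions
  set Q : ∀ i : Fin ℓ, Fin (nv i) → Prop := fun i c => j ≤ i ∧ (i = j → lam ≤ (c : ℕ)) with hQ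
  -- the target type
  set T := ∀ i : Fin ℓ, Fin (mv i) → {c : Fin (nv i) // Q i c} → F with hT
  set g : C → T := fun X i k c => (X : ∀ i, Matrix (Fin (mv i)) (Fin (nv i)) F) i k c.1 with hg
  -- injectivity
  have hginj : Function.Injective g := by
    rintro ⟨X, hX⟩ ⟨Y, hY⟩ hXYg
    by_contra hne
    have hXY : X ≠ Y := fun h => hne (Subtype.ext h)
    have hkey : ∀ (i : Fin ℓ) (k : Fin (mv i)) (c : Fin (nv i)), Q i c → X i k c = Y i k c := by
      intro i k c hc
      exact congrFun (congrFun (congrFun hXYg i) k) ⟨c, hc⟩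
    have hw : d ≤ ∑ i, (X i - Y i).rank := hd.2 ⟨X, hX, Y, hY, hXY, rfl⟩
    have hbound : ∑ i, (X i - Y i).rank ≤ (∑ i ∈ Finset.univ.filter (· < j), nv i) + lam := by
      rw [← Finset.sum_filter_add_sum_filter_not Finset.univ (· < j)]
      apply Nat.add_le_add
      · apply Finset.sum_le_sum
        intro i _
        exact (X i - Y i).rank_le_card_width.trans (Fintype.card_fin (nv i)).le
      · calc ∑ i ∈ Finset.univ.filter (fun i => ¬ i < j), (X i - Y i).rank
            ≤ ∑ i ∈ Finset.univ.filter (fun i => ¬ i < j), (if i = j then lam else 0) := by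
              apply Finset.sum_le_sum
              intro i hi
              have hji : j ≤ i := le_of_not_gt (Finset.mem_filter.mp hi).2
              by_cases hij : i = j
              · subst hij
                rw [if_pos rfl]
                apply aux_rank_le_of_cols hlam.le
                intro k c hc
                rw [Matrix.sub_apply, hkey i k c ⟨le_refl i, fun _ => hc⟩, sub_self]
              · rw [if_neg hij]
                have : X i - Y i = 0 := by
                  ext k c
                  simp [Matrix.sub_apply, hkey i k c ⟨hji, fun h => absurd h hij⟩]
                rw [this, Matrix.rank_zero]
          _ = lam := by
              rw [Finset.sum_ite_eq' _ j (fun _ => lam)]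
              rw [if_pos]
              simp
    omega
  -- cardinality of the target
  have hfin : Finite T := by infer_instance
  have hle : Nat.card C ≤ Nat.card T := Nat.card_le_card_of_injective g hginj
  set N : Fin ℓ → ℕ := fun i => Nat.card {c : Fin (nv i) // Q i c} with hN
  have hcardT : Nat.card T = q ^ ∑ i, mv i * N i := by
    rw [hT, Nat.card_pi, ← Finset.prod_pow_eq_pow_sum]
    apply Finset.prod_congr rfl
    intro i _
    rw [Nat.card_fun, Nat.card_fun, Nat.card_eq_fintype_card (α := F), hcard,
      Nat.card_eq_fintype_card (α := Fin (mv i)), Fintype.card_fin, ← pow_mul, mul_comm]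
  -- compute N i
  have hNlt : ∀ i : Fin ℓ, i < j → N i = 0 := by
    intro i hij
    have : IsEmpty {c : Fin (nv i) // Q i c} := by
      constructor
      rintro ⟨c, hc, -⟩
      exact absurd hc (not_le_of_gt hij)
    exact Nat.card_of_isEmpty
  have hNj : N j = nv j - lam := by
    show Nat.card {c : Fin (nv j) // Q j c} = nv j - lam
    have e : {c : Fin (nv j) // Q j c} ≃ {c : Fin (nv j) // lam ≤ (c : ℕ)} :=
      Equiv.subtypeEquivRight (by intro c; simp [hQ])
    rw [Nat.card_congr e, aux_card_subtype_le hlam.le]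
  have hNgt : ∀ i : Fin ℓ, j < i → N i = nv i := by
    intro i hij
    show Nat.card {c : Fin (nv i) // Q i c} = nv i
    have e : {c : Fin (nv i) // Q i c} ≃ Fin (nv i) :=
      Equiv.subtypeUnivEquiv (by
        intro c
        exact ⟨hij.le, fun h => absurd h (by intro h'; exact absurd h' (ne_of_gt hij))⟩)
    rw [Nat.card_congr e, Nat.card_eq_fintype_card, Fintype.card_fin]
  -- the exponent computation
  have hsum0 : ∑ i ∈ Finset.univ.filter (· < j), mv i * N i = 0 := by
    apply Finset.sum_eq_zero
    intro i hi
    rw [hNlt i (Finset.mem_filter.mp hi).2, mul_zero]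
  have hexp : (∑ i ∈ Finset.univ.filter (j ≤ ·), mv i * nv i)
      = (∑ i ∈ Finset.univ.filter (j ≤ ·), mv i * N i) + mv j * lam := by
    have : ∀ i ∈ Finset.univ.filter (j ≤ ·),
        mv i * nv i = mv i * N i + (if i = j then mv j * lam else 0) := by
      intro i hi
      have hji : j ≤ i := by simpa using (Finset.mem_filter.mp hi).2
      by_cases hij : i = j
      · subst hij
        rw [if_pos rfl, hNj]
        have := hlam.le
        rw [← Nat.mul_add, Nat.sub_add_cancel this]
      · rw [if_neg hij, hNgt i (lt_of_le_of_ne hji (Ne.symm hij)), add_zero]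
    rw [Finset.sum_congr rfl this, Finset.sum_add_distrib,
      Finset.sum_ite_eq' _ j (fun _ => mv j * lam), if_pos (by simp)]
  have hsplit : ∑ i, mv i * N i
      = (∑ i ∈ Finset.univ.filter (· < j), mv i * N i)
        + ∑ i ∈ Finset.univ.filter (fun i => ¬ i < j), mv i * N i := by
    rw [Finset.sum_filter_add_sum_filter_not]
  have hfiltereq : Finset.univ.filter (fun i : Fin ℓ => ¬ i < j) = Finset.univ.filter (j ≤ ·) := by
    apply Finset.filter_congr
    intro i _
    simp [not_lt]
  have : ∑ i, mv i * N i
      = (∑ i ∈ Finset.univ.filter (j ≤ ·), mv i * nv i) - mv j * lam := by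
    rw [hsplit, hsum0, hfiltereq] at *
    omega
  rw [← this]
  rw [← hcardT]
  exact hle
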